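/- arXiv:2107.08162 — 3 statements merged into one kernel-verified Lean document; each statement's English description precedes it below -/
import Mathlib

section
/- Let f : 𝕆 → 𝕆 be ℝ-linear such that Re(f(px) − p·f(x)) = 0 for all p, x ∈ 𝕆 (f is left para-linear). Then for every element x of the standard basis e₀=1, e₁, …, e₇ of 𝕆, the i-th real coordinate of f(x) equals Re(f(conj(eᵢ)·x)) for i = 0, …, 7; equivalently f(x) = Re f(x) − Σ_{i=1}^{7} eᵢ · Re f(eᵢ x). -/
noncomputable section

open Quaternion

/-- The octonions, as the Cayley–Dickson double of the quaternions. -/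
def Octo : Type := ℍ × ℍ

namespace Octo

instance : AddCommGroup Octo := inferInstanceAs (AddCommGroup (ℍ × ℍ))
instance : Module ℝ Octo := inferInstanceAs (Module ℝ (ℍ × ℍ))

/-- Cayley–Dickson multiplication: (a,b)(c,d) = (ac − d̄b, da + bc̄). -/
instance : Mul Octo :=
  ⟨fun x y => ((x.1 * y.1 - star y.2 * x.2, y.2 * x.1 + x.2 * star y.1) : ℍ × ℍ)⟩

/-- Octonionic conjugation. -/
def conj (x : Octo) : Octo := ((star x.1, -x.2) : ℍ × ℍ)

/-- Real part. -/
def re (x : Octo) : ℝ := x.1.re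

/-- Squared norm. -/
def normSq (x : Octo) : ℝ := re (x * conj x)

/-- The standard basis e₀ = 1, e₁, …, e₇. -/
def e : Fin 8 → Octo :=
  ![((1, 0) : ℍ × ℍ), ((⟨0,1,0,0⟩, 0) : ℍ × ℍ), ((⟨0,0,1,0⟩, 0) : ℍ × ℍ),
    ((⟨0,0,0,1⟩, 0) : ℍ × ℍ), ((0, 1) : ℍ × ℍ), ((0, ⟨0,1,0,0⟩) : ℍ × ℍ),
    ((0, ⟨0,0,1,0⟩) : ℍ × ℍ), ((0, ⟨0,0,0,1⟩) : ℍ × ℍ)]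

/-- Inverse: p⁻¹ = conj p / |p|². -/
def inv (x : Octo) : Octo := (normSq x)⁻¹ • conj x

/-- The associator [a,b,c] = (ab)c − a(bc). -/
def assoc (a b c : Octo) : Octo := a * b * c - a * (b * c)

/-- Left para-linear map: ℝ-linear with Re(f(px) − p f(x)) = 0. -/
def IsParaLinear (f : Octo → Octo) : Prop :=
  IsLinearMap ℝ f ∧ ∀ p x : Octo, re (f (p * x) - p * f x) = 0

end Octo

lemma octo_re_sub (a b : Octo) : Octo.re (a - b) = Octo.re a - Octo.re b := by
  show (a.1 - b.1).re = a.1.re - b.1.re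
  simp

lemma octo_icc : Finset.Icc (1 : Fin 8) 7 = {1,2,3,4,5,6,7} := by decide

lemma octo_mul_def (x y : Octo) :
    x * y = ((x.1 * y.1 - star y.2 * x.2, y.2 * x.1 + x.2 * star y.1) : ℍ × ℍ) := rfl

lemma oe0 : Octo.e 0 = ((1, 0) : ℍ × ℍ) := rfl
lemma oe1 : Octo.e 1 = ((⟨0,1,0,0⟩, 0) : ℍ × ℍ) := rfl
lemma oe2 : Octo.e 2 = ((⟨0,0,1,0⟩, 0) : ℍ × ℍ) := rfl
lemma oe3 : Octo.e 3 = ((⟨0,0,0,1⟩, 0) : ℍ × ℍ) := rfl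
lemma oe4 : Octo.e 4 = ((0, 1) : ℍ × ℍ) := rfl
lemma oe5 : Octo.e 5 = ((0, ⟨0,1,0,0⟩) : ℍ × ℍ) := rfl
lemma oe6 : Octo.e 6 = ((0, ⟨0,0,1,0⟩) : ℍ × ℍ) := rfl
lemma oe7 : Octo.e 7 = ((0, ⟨0,0,0,1⟩) : ℍ × ℍ) := rfl

lemma ofst_add (x y : Octo) : (x + y).1 = x.1 + y.1 := rfl
lemma osnd_add (x y : Octo) : (x + y).2 = x.2 + y.2 := rfl
lemma ofst_sub (x y : Octo) : (x - y).1 = x.1 - y.1 := rfl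
lemma osnd_sub (x y : Octo) : (x - y).2 = x.2 - y.2 := rfl
lemma ofst_neg (x : Octo) : (-x).1 = -x.1 := rfl
lemma osnd_neg (x : Octo) : (-x).2 = -x.2 := rfl
lemma ofst_smul (r : ℝ) (x : Octo) : (r • x).1 = r • x.1 := rfl
lemma osnd_smul (r : ℝ) (x : Octo) : (r • x).2 = r • x.2 := rfl

def qm (a b c d : ℝ) : ℍ := ⟨a, b, c, d⟩
lemma qm_eq (a b c d : ℝ) : (⟨a, b, c, d⟩ : ℍ) = qm a b c d := rfl
@[simp] lemma qm_re (a b c d : ℝ) : (qm a b c d).re = a := rfl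
@[simp] lemma qm_imI (a b c d : ℝ) : (qm a b c d).imI = b := rfl
@[simp] lemma qm_imJ (a b c d : ℝ) : (qm a b c d).imJ = c := rfl
@[simp] lemma qm_imK (a b c d : ℝ) : (qm a b c d).imK = d := rfl

lemma octo_key (y : Octo) :
    y = Octo.re y • Octo.e 0 - ∑ i ∈ Finset.Icc (1 : Fin 8) 7, Octo.re (Octo.e i * y) • Octo.e i := by
  rw [octo_icc]
  rw [Finset.sum_insert (by decide), Finset.sum_insert (by decide),
    Finset.sum_insert (by decide), Finset.sum_insert (by decide),
    Finset.sum_insert (by decide), Finset.sum_insert (by decide), Finset.sum_singleton]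
  refine Prod.ext ?_ ?_ <;>
    · show _ = _
      simp only [octo_mul_def, Octo.re, ofst_add, osnd_add, ofst_sub, osnd_sub, ofst_neg, osnd_neg, ofst_smul, osnd_smul]
      ext <;>
        simp [Quaternion.re_mul, Quaternion.imI_mul, Quaternion.imJ_mul, Quaternion.imK_mul,
          QuaternionAlgebra.re_mul, QuaternionAlgebra.imI_mul, QuaternionAlgebra.imJ_mul,
          QuaternionAlgebra.imK_mul, QuaternionAlgebra.star_mk, qm_eq, oe0, oe1, oe2, oe3, oe4, oe5, oe6, oe7]

theorem stmt8 (f : Octo → Octo) (hf : Octo.IsParaLinear f) (x : Octo) :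
    f x = Octo.re (f x) • Octo.e 0
      - ∑ i ∈ Finset.Icc (1 : Fin 8) 7, Octo.re (f (Octo.e i * x)) • Octo.e i := by
  have h : ∀ i, Octo.re (f (Octo.e i * x)) = Octo.re (Octo.e i * f x) := by
    intro i
    have := hf.2 (Octo.e i) x
    rw [octo_re_sub] at this
    linarith
  calc f x = Octo.re (f x) • Octo.e 0
      - ∑ i ∈ Finset.Icc (1 : Fin 8) 7, Octo.re (Octo.e i * f x) • Octo.e i := octo_key (f x)
    _ = _ := by
        congr 1
        exact Finset.sum_congr rfl fun i _ => by rw [h i]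
end
end

section
/- Let f : 𝕆 → 𝕆 be left para-linear (ℝ-linear with Re(f(px) − p f(x)) = 0 for all p, x). Then its second associator is expressed by associators of octonions: f(px) − p f(x) = Σ_{i=1}^{7} eᵢ · Re f([eᵢ, p, x]) for all p, x ∈ 𝕆, where [a,b,c] = (ab)c − a(bc). -/
noncomputable section

open Quaternion

namespace Octo

lemma mul_def' (x y : Octo) :
    x * y = ((x.1 * y.1 - star y.2 * x.2, y.2 * x.1 + x.2 * star y.1) : ℍ × ℍ) := rfl
lemma mul_fst (x y : Octo) : (x * y).1 = x.1 * y.1 - star y.2 * x.2 := rfl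
lemma mul_snd (x y : Octo) : (x * y).2 = y.2 * x.1 + x.2 * star y.1 := rfl
def qmk (a b c d : ℝ) : ℍ := ⟨a, b, c, d⟩
lemma qmk_re (a b c d : ℝ) : (qmk a b c d).re = a := rfl
lemma qmk_imI (a b c d : ℝ) : (qmk a b c d).imI = b := rfl
lemma qmk_imJ (a b c d : ℝ) : (qmk a b c d).imJ = c := rfl
lemma qmk_imK (a b c d : ℝ) : (qmk a b c d).imK = d := rfl
lemma e1' : e 1 = ((qmk 0 1 0 0, 0) : ℍ × ℍ) := rfl
lemma e2' : e 2 = ((qmk 0 0 1 0, 0) : ℍ × ℍ) := rfl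
lemma e3' : e 3 = ((qmk 0 0 0 1, 0) : ℍ × ℍ) := rfl
lemma e4' : e 4 = ((0, 1) : ℍ × ℍ) := rfl
lemma e5' : e 5 = ((0, qmk 0 1 0 0) : ℍ × ℍ) := rfl
lemma e6' : e 6 = ((0, qmk 0 0 1 0) : ℍ × ℍ) := rfl
lemma e7' : e 7 = ((0, qmk 0 0 0 1) : ℍ × ℍ) := rfl
lemma add_fst (x y : Octo) : (x + y).1 = x.1 + y.1 := rfl
lemma add_snd (x y : Octo) : (x + y).2 = x.2 + y.2 := rfl
lemma smul_fst (r : ℝ) (x : Octo) : (r • x).1 = r • x.1 := rfl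
lemma smul_snd (r : ℝ) (x : Octo) : (r • x).2 = r • x.2 := rfl
lemma sub_fst (x y : Octo) : (x - y).1 = x.1 - y.1 := rfl
lemma sub_snd (x y : Octo) : (x - y).2 = x.2 - y.2 := rfl
lemma re_sub (u v : Octo) : re (u - v) = re u - re v := by
  simp [re, sub_fst, Quaternion.re_sub]

lemma re_assoc_comm (a b c : Octo) : re ((a * b) * c) = re (a * (b * c)) := by
  simp only [mul_fst, mul_snd, re, Quaternion.re_sub, Quaternion.re_add, Quaternion.re_mul,
    Quaternion.imI_mul, Quaternion.imJ_mul, Quaternion.imK_mul,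
    Quaternion.imI_sub, Quaternion.imJ_sub, Quaternion.imK_sub,
    Quaternion.imI_add, Quaternion.imJ_add, Quaternion.imK_add,
    Quaternion.re_star, Quaternion.imI_star, Quaternion.imJ_star, Quaternion.imK_star]
  ring

lemma re_mul_sub (a u v : Octo) : re (a * (u - v)) = re (a * u) - re (a * v) := by
  simp only [mul_fst, mul_snd, re, sub_fst, sub_snd, Quaternion.re_sub, Quaternion.re_mul,
    Quaternion.imI_sub, Quaternion.imJ_sub, Quaternion.imK_sub,
    Quaternion.re_star, Quaternion.imI_star, Quaternion.imJ_star, Quaternion.imK_star]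
  ring

lemma key (z : Octo) (hz : re z = 0) :
    z = ∑ i ∈ Finset.Icc (1 : Fin 8) 7, (-re (e i * z)) • e i := by
  have h : Finset.Icc (1 : Fin 8) 7 = {1,2,3,4,5,6,7} := by decide
  rw [h]
  rw [Finset.sum_insert (by decide), Finset.sum_insert (by decide),
    Finset.sum_insert (by decide), Finset.sum_insert (by decide),
    Finset.sum_insert (by decide), Finset.sum_insert (by decide), Finset.sum_singleton]
  simp only [re] at hz
  refine Prod.ext ?_ ?_ <;>
    · simp only [add_fst, add_snd, smul_fst, smul_snd, re, mul_fst, mul_snd]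
      rw [e1', e2', e3', e4', e5', e6', e7']
      ext <;>
        simp [Quaternion.re_mul, Quaternion.imI_mul, Quaternion.imJ_mul, Quaternion.imK_mul,
          Quaternion.re_smul, Quaternion.imI_smul, Quaternion.imJ_smul,
          Quaternion.imK_smul, smul_eq_mul, qmk_re, qmk_imI, qmk_imJ, qmk_imK, hz]

end Octo

theorem stmt10 (f : Octo → Octo) (hf : Octo.IsParaLinear f) (p x : Octo) :
    f (p * x) - p * f x
      = ∑ i ∈ Finset.Icc (1 : Fin 8) 7, Octo.re (f (Octo.assoc (Octo.e i) p x)) • Octo.e i := by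
  obtain ⟨hlin, hpara⟩ := hf
  have hsub : ∀ u v : Octo, f (u - v) = f u - f v :=
    fun u v => (IsLinearMap.mk' f hlin).map_sub u v
  have h0 : Octo.re (f (p * x) - p * f x) = 0 := hpara p x
  rw [Octo.key _ h0]
  refine Finset.sum_congr rfl fun i _ => ?_
  congr 1
  have h1 : Octo.re (f ((Octo.e i * p) * x) - (Octo.e i * p) * f x) = 0 := hpara _ _
  have h2 : Octo.re (f (Octo.e i * (p * x)) - Octo.e i * f (p * x)) = 0 := hpara _ _
  rw [Octo.re_sub] at h1 h2
  have h3 := Octo.re_assoc_comm (Octo.e i) p (f x)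
  have h4 := Octo.re_mul_sub (Octo.e i) (f (p * x)) (p * f x)
  have h5 : Octo.re (f (Octo.assoc (Octo.e i) p x))
      = Octo.re (f ((Octo.e i * p) * x)) - Octo.re (f (Octo.e i * (p * x))) := by
    rw [Octo.assoc, hsub, Octo.re_sub]
  linarith
end
end

section
/- Let f : 𝕆 → 𝕆 be left para-linear and define its second associator [p,x,f] := f(px) − p f(x). Then p·[p,x,f] = [p,x,f]·conj(p) and p·[p,x,f] = [p, conj(p)·x, f] for all p, x ∈ 𝕆. -/
noncomputable section

open Quaternion

namespace OctoAux

lemma fst_mul (x y : Octo) : (x * y).1 = x.1 * y.1 - star y.2 * x.2 := rfl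
lemma snd_mul (x y : Octo) : (x * y).2 = y.2 * x.1 + x.2 * star y.1 := rfl
lemma fst_sub (x y : Octo) : (x - y).1 = x.1 - y.1 := rfl
lemma snd_sub (x y : Octo) : (x - y).2 = x.2 - y.2 := rfl
lemma fst_smul (r : ℝ) (x : Octo) : (r • x).1 = r • x.1 := rfl
lemma snd_smul (r : ℝ) (x : Octo) : (r • x).2 = r • x.2 := rfl
lemma re_def (x : Octo) : Octo.re x = x.1.re := rfl

lemma re_sub (x y : Octo) : Octo.re (x - y) = Octo.re x - Octo.re y := rfl
lemma re_smul (r : ℝ) (x : Octo) : Octo.re (r • x) = r * Octo.re x := by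
  simp [re_def, fst_smul, Quaternion.re_smul]

lemma mul_sub' (a b c : Octo) : a * (b - c) = a * b - a * c := by
  apply Prod.ext
  · simp only [fst_mul, fst_sub, snd_sub, star_sub]; noncomm_ring
  · simp only [snd_mul, fst_sub, snd_sub, star_sub]; noncomm_ring

lemma mul_smul' (r : ℝ) (a b : Octo) : a * (r • b) = r • (a * b) := by
  apply Prod.ext
  · simp only [fst_mul, fst_smul, snd_smul, Quaternion.star_smul, smul_sub,
      smul_mul_assoc, mul_smul_comm]
  · simp only [snd_mul, fst_smul, snd_smul, Quaternion.star_smul, smul_add,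
      smul_mul_assoc, mul_smul_comm]

lemma conj_mul_eq (p x : Octo) : Octo.conj p * x = (2 * Octo.re p) • x - p * x := by
  apply Prod.ext
  · show star p.1 * x.1 - star x.2 * (-p.2)
        = ((2 * Octo.re p) • x - p * x).1
    have h := p.1.star_add_self'
    have key : star p.1 * x.1 + p.1 * x.1 = (2 * p.1.re) • x.1 := by
      rw [← add_mul, h, Quaternion.coe_mul_eq_smul]
    simp only [fst_sub, fst_smul, fst_mul, re_def]
    rw [← key]; noncomm_ring
  · show x.2 * star p.1 + (-p.2) * star x.1
        = ((2 * Octo.re p) • x - p * x).2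
    have h := p.1.self_add_star'
    have key : x.2 * p.1 + x.2 * star p.1 = (2 * p.1.re) • x.2 := by
      rw [← mul_add, h, Quaternion.mul_coe_eq_smul]
    simp only [snd_sub, snd_smul, snd_mul, re_def]
    rw [← key]; noncomm_ring

end OctoAux

namespace OctoAux

lemma normSq_eq (p : Octo) :
    Octo.normSq p = Quaternion.normSq p.1 + Quaternion.normSq p.2 := by
  show Octo.re (p * Octo.conj p) = _
  rw [re_def, fst_mul]
  show (p.1 * star p.1 - star (-p.2) * p.2).re = _
  rw [star_neg, neg_mul, sub_neg_eq_add, Quaternion.self_mul_star,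
    Quaternion.star_mul_self]
  simp

lemma conj_mul_self (p x : Octo) : Octo.conj p * (p * x) = Octo.normSq p • x := by
  apply Prod.ext
  · show star p.1 * (p.1 * x.1 - star x.2 * p.2)
        - star (x.2 * p.1 + p.2 * star x.1) * (-p.2) = (Octo.normSq p • x).1
    rw [fst_smul, normSq_eq, add_smul]
    have e1 : star p.1 * (p.1 * x.1) = Quaternion.normSq p.1 • x.1 := by
      rw [← mul_assoc, Quaternion.star_mul_self, Quaternion.coe_mul_eq_smul]
    have e2 : x.1 * star p.2 * p.2 = Quaternion.normSq p.2 • x.1 := by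
      rw [mul_assoc, Quaternion.star_mul_self, Quaternion.mul_coe_eq_smul]
    have expand : star p.1 * (p.1 * x.1 - star x.2 * p.2)
        - star (x.2 * p.1 + p.2 * star x.1) * (-p.2)
        = star p.1 * (p.1 * x.1) + x.1 * star p.2 * p.2 := by
      simp only [star_add, star_mul, star_star]; noncomm_ring
    rw [expand, e1, e2]
  · show (x.2 * p.1 + p.2 * star x.1) * star p.1
        + (-p.2) * star (p.1 * x.1 - star x.2 * p.2) = (Octo.normSq p • x).2
    rw [snd_smul, normSq_eq, add_smul]
    have e1 : x.2 * p.1 * star p.1 = Quaternion.normSq p.1 • x.2 := by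
      rw [mul_assoc, Quaternion.self_mul_star, Quaternion.mul_coe_eq_smul]
    have e2 : p.2 * star p.2 * x.2 = Quaternion.normSq p.2 • x.2 := by
      rw [Quaternion.self_mul_star, Quaternion.coe_mul_eq_smul]
    have expand : (x.2 * p.1 + p.2 * star x.1) * star p.1
        + (-p.2) * star (p.1 * x.1 - star x.2 * p.2)
        = x.2 * p.1 * star p.1 + p.2 * star p.2 * x.2 := by
      simp only [star_sub, star_mul, star_star]; noncomm_ring
    rw [expand, e1, e2]

end OctoAux

namespace OctoAux

lemma conj_conj (p : Octo) : Octo.conj (Octo.conj p) = p := by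
  apply Prod.ext
  · show star (star p.1) = p.1; rw [star_star]
  · show -(-p.2) = p.2; rw [neg_neg]

lemma normSq_conj (p : Octo) : Octo.normSq (Octo.conj p) = Octo.normSq p := by
  rw [normSq_eq, normSq_eq]
  show Quaternion.normSq (star p.1) + Quaternion.normSq (-p.2) = _
  rw [Quaternion.normSq_star, Quaternion.normSq_neg]

lemma self_mul_conj (p x : Octo) : p * (Octo.conj p * x) = Octo.normSq p • x := by
  have h := conj_mul_self (Octo.conj p) x
  rw [conj_conj, normSq_conj] at h
  exact h

lemma key1 (q a : Octo) (h0 : Octo.re a = 0) (h1 : Octo.re (q * a) = 0) :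
    q * a = a * Octo.conj q := by
  have hs : star a.1 = -a.1 := Quaternion.star_eq_neg.2 h0
  apply Prod.ext
  · show q.1 * a.1 - star a.2 * q.2 = a.1 * star q.1 - star (-q.2) * a.2
    rw [star_neg, neg_mul, sub_neg_eq_add]
    have e1 : q.1 * a.1 - a.1 * star q.1 = ((2 * (q.1 * a.1).re : ℝ) : ℍ) := by
      rw [← Quaternion.self_add_star' (q.1 * a.1)]
      rw [star_mul, hs, neg_mul, sub_eq_add_neg]
    have e2 : star a.2 * q.2 + star q.2 * a.2 = ((2 * (star a.2 * q.2).re : ℝ) : ℍ) := by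
      rw [← Quaternion.self_add_star' (star a.2 * q.2), star_mul, star_star]
    have hre : (q.1 * a.1).re = (star a.2 * q.2).re := by
      have h1'' : Octo.re (q * a) = (q.1 * a.1 - star a.2 * q.2).re := rfl
      rw [h1''] at h1
      simp only [Quaternion.re_sub] at h1
      linarith
    have key : q.1 * a.1 - star a.2 * q.2 - (a.1 * star q.1 + star q.2 * a.2)
        = ((2 * (q.1 * a.1).re : ℝ) : ℍ) - ((2 * (star a.2 * q.2).re : ℝ) : ℍ) := by
      rw [← e1, ← e2]; noncomm_ring
    rw [hre, sub_self] at key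
    exact sub_eq_zero.mp key
  · show a.2 * q.1 + q.2 * star a.1 = (Octo.conj q).2 * a.1 + a.2 * star (Octo.conj q).1
    show a.2 * q.1 + q.2 * star a.1 = -q.2 * a.1 + a.2 * star (star q.1)
    rw [hs, star_star, mul_neg, neg_mul, add_comm]

end OctoAux

theorem stmt13 (f : Octo → Octo) (hf : Octo.IsParaLinear f) (p x : Octo) :
    p * (f (p * x) - p * f x) = (f (p * x) - p * f x) * Octo.conj p ∧
      p * (f (p * x) - p * f x)
        = f (p * (Octo.conj p * x)) - p * f (Octo.conj p * x) := by
  classical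
  obtain ⟨hl, hp⟩ := hf
  set A := f (p * x) - p * f x with hA
  have hA0 : Octo.re A = 0 := hp p x
  -- generic: q * z = (2 * re q) • z - conj q * z
  have mul_eq : ∀ q z : Octo, q * z = (2 * Octo.re q) • z - Octo.conj q * z := by
    intro q z
    rw [OctoAux.conj_mul_eq]
    abel
  -- p * (p * z) = (2 re p) • (p*z) - normSq p • z
  have sq_mul : ∀ z : Octo, p * (p * z) = (2 * Octo.re p) • (p * z) - Octo.normSq p • z := by
    intro z
    rw [mul_eq p (p * z), OctoAux.conj_mul_self]
  have hfsub := hl.map_sub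
  have hfsmul := hl.map_smul
  -- f (p * (p * x))
  have hfpx : f (p * (p * x)) = (2 * Octo.re p) • f (p * x) - Octo.normSq p • f x := by
    rw [sq_mul x, hfsub, hfsmul, hfsmul]
  -- re (p * A) = 0
  have hpA : Octo.re (p * A) = 0 := by
    have h1 : Octo.re (f (p * (p * x)) - p * f (p * x)) = 0 := hp p (p * x)
    rw [OctoAux.re_sub, hfpx, OctoAux.re_sub, OctoAux.re_smul, OctoAux.re_smul] at h1
    have h2 : Octo.re A = 0 := hA0
    rw [hA, OctoAux.re_sub] at h2
    rw [hA, OctoAux.mul_sub' p, OctoAux.re_sub, sq_mul (f x), OctoAux.re_sub,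
      OctoAux.re_smul, OctoAux.re_smul]
    linear_combination -h1 + 2 * Octo.re p * h2
  constructor
  · exact OctoAux.key1 p A hA0 hpA
  · have hc : Octo.conj p * x = (2 * Octo.re p) • x - p * x := OctoAux.conj_mul_eq p x
    have h3 : f (Octo.conj p * x) = (2 * Octo.re p) • f x - f (p * x) := by
      rw [hc, hfsub, hfsmul]
    rw [OctoAux.self_mul_conj, hfsmul, h3]
    rw [OctoAux.mul_sub' p ((2 * Octo.re p) • f x) (f (p * x)), OctoAux.mul_smul']
    rw [hA, OctoAux.mul_sub' p, sq_mul (f x)]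
    abel
end
end
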